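/- Single-agent off-policy policy gradient identity with emphatic weightings: the gradient of the off-policy objective J_μ(θ) = Σ_{s∈S} d_μ(s) v_θ(s) satisfies ∇_θ J_μ(θ) = Σ_{s∈S} m(s) Σ_{a∈A} [∇_θ π_θ(a|s)] q_θ(s,a), where m is the emphatic weighting vector defined by mᵀ = d_μᵀ (I − P_{θ,γ})⁻¹. -/

import Mathlib

open Matrix

/-- Products of differentiable real-valued functions are differentiable. -/
lemma aux_prod_diff {ι E : Type*} [DecidableEq ι] [NormedAddCommGroup E] [NormedSpace ℝ E]
    (u : Finset ι) (f : ι → E → ℝ) (x : E)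
    (h : ∀ i ∈ u, DifferentiableAt ℝ (f i) x) :
    DifferentiableAt ℝ (fun e => ∏ i ∈ u, f i e) x :=
  (HasFDerivAt.finset_prod (fun i hi => (h i hi).hasFDerivAt)).differentiableAt

/-- The determinant of a matrix with differentiable entries is differentiable. -/
lemma aux_det_diff {S E : Type*} [Fintype S] [DecidableEq S]
    [NormedAddCommGroup E] [NormedSpace ℝ E]
    (N : E → Matrix S S ℝ) (x : E)
    (h : ∀ i j, DifferentiableAt ℝ (fun e => N e i j) x) :
    DifferentiableAt ℝ (fun e => (N e).det) x := by
  simp only [Matrix.det_apply']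
  exact DifferentiableAt.fun_sum fun (σ : Equiv.Perm S) _ =>
    DifferentiableAt.const_mul (aux_prod_diff _ _ _ fun i _ => h (σ i) i) _

/-- Exchanging a weighted double sum. -/
lemma aux_swap {ι κ : Type*} [Fintype ι] [Fintype κ]
    (g : ι → ℝ) (h : ι → κ → ℝ) (w : κ → ℝ) (γ : ℝ) :
    ∑ i, g i * (γ * ∑ k, h i k * w k) = ∑ k, (γ * ∑ i, g i * h i k) * w k := by
  simp only [Finset.mul_sum, Finset.sum_mul]
  rw [Finset.sum_comm]
  exact Finset.sum_congr rfl fun k _ => Finset.sum_congr rfl fun i _ => by ring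

/-- Exchanging another weighted double sum. -/
lemma aux_swap2 {ι κ : Type*} [Fintype ι] [Fintype κ]
    (g : ι → ℝ) (B : ι → κ → ℝ) (c : κ → ℝ) :
    ∑ i, g i * ∑ k, B i k * c k = ∑ k, (∑ i, g i * B i k) * c k := by
  simp only [Finset.mul_sum, Finset.sum_mul]
  rw [Finset.sum_comm]
  exact Finset.sum_congr rfl fun k _ => Finset.sum_congr rfl fun i _ => by ring

/-- Single-agent off-policy policy gradient identity with emphatic weightings:
`∇_θ J_μ(θ) = ∑_s m(s) ∑_a [∇_θ π_θ(a|s)] q_θ(s,a)` where `mᵀ = d_μᵀ (I − P_{θ,γ})⁻¹`. -/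
theorem single_agent_off_policy_policy_gradient
    {S A : Type*} [Fintype S] [Nonempty S] [DecidableEq S] [Fintype A] [Nonempty A]
    (d : ℕ)
    -- transition kernel
    (P : S → A → S → ℝ)
    (hP0 : ∀ s a s', 0 ≤ P s a s') (hP1 : ∀ s a, ∑ s', P s a s' = 1)
    -- reward and discount
    (rbar : S → A → ℝ)
    (γ : ℝ) (hγ0 : 0 < γ) (hγ1 : γ < 1)
    -- parametrized policy
    (π : EuclideanSpace ℝ (Fin d) → S → A → ℝ)
    (hπ0 : ∀ θ s a, 0 ≤ π θ s a)
    (hπ1 : ∀ θ s, ∑ a, π θ s a = 1)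
    (hπC1 : ∀ s a, ContDiff ℝ 1 (fun θ => π θ s a))
    -- fixed distribution d_μ
    (dμ : S → ℝ) (hdμ0 : ∀ s, 0 ≤ dμ s) (hdμ1 : ∑ s, dμ s = 1)
    -- the matrix P_{θ,γ}
    (Pγ : EuclideanSpace ℝ (Fin d) → Matrix S S ℝ)
    (hPγ : ∀ θ s s', Pγ θ s s' = γ * ∑ a, π θ s a * P s a s')
    -- the value function v_θ = (I − P_{θ,γ})⁻¹ r_{π_θ}
    (v : EuclideanSpace ℝ (Fin d) → S → ℝ)
    (hv : ∀ θ, v θ = (1 - Pγ θ)⁻¹ *ᵥ (fun s => ∑ a, π θ s a * rbar s a))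
    -- the action-value function q_θ
    (q : EuclideanSpace ℝ (Fin d) → S → A → ℝ)
    (hq : ∀ θ s a, q θ s a = rbar s a + γ * ∑ s', P s a s' * v θ s')
    -- the off-policy objective J_μ
    (J : EuclideanSpace ℝ (Fin d) → ℝ)
    (hJ : ∀ θ, J θ = ∑ s, dμ s * v θ s)
    -- the emphatic weighting mᵀ = d_μᵀ (I − P_{θ,γ})⁻¹
    (m : EuclideanSpace ℝ (Fin d) → S → ℝ)
    (hm : ∀ θ s, m θ s = ∑ s', dμ s' * (1 - Pγ θ)⁻¹ s' s)
    (θ : EuclideanSpace ℝ (Fin d)) :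
    fderiv ℝ J θ
      = ∑ s, ∑ a, (m θ s * q θ s a) • fderiv ℝ (fun θ' => π θ' s a) θ := by
  classical
  -- basic differentiability facts
  have hπd : ∀ (θ' : EuclideanSpace ℝ (Fin d)) s a,
      DifferentiableAt ℝ (fun θ'' => π θ'' s a) θ' :=
    fun θ' s a => ((hπC1 s a).differentiable one_ne_zero).differentiableAt
  have hPγd : ∀ (θ' : EuclideanSpace ℝ (Fin d)) s s',
      DifferentiableAt ℝ (fun θ'' => Pγ θ'' s s') θ' := by
    intro θ' s s'
    have he : (fun θ'' => Pγ θ'' s s') = fun θ'' => γ * ∑ a, π θ'' s a * P s a s' := by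
      funext θ''; rw [hPγ]
    rw [he]
    exact (DifferentiableAt.fun_sum fun a _ => (hπd θ' s a).mul_const _).const_mul _
  have hMd : ∀ (θ' : EuclideanSpace ℝ (Fin d)) s s',
      DifferentiableAt ℝ (fun θ'' => (1 - Pγ θ'') s s') θ' := by
    intro θ' s s'
    have he : (fun θ'' => (1 - Pγ θ'') s s')
        = fun θ'' => (1 : Matrix S S ℝ) s s' - Pγ θ'' s s' := by
      funext θ''; simp [Matrix.sub_apply]
    rw [he]
    exact (differentiableAt_const _).sub (hPγd θ' s s')
  -- entries of Pγ are nonnegative with row sums γ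
  have hPγ0 : ∀ (θ' : EuclideanSpace ℝ (Fin d)) s s', 0 ≤ Pγ θ' s s' := by
    intro θ' s s'; rw [hPγ]
    exact mul_nonneg hγ0.le
      (Finset.sum_nonneg fun a _ => mul_nonneg (hπ0 θ' s a) (hP0 s a s'))
  have hPγsum : ∀ (θ' : EuclideanSpace ℝ (Fin d)) s, ∑ s', Pγ θ' s s' = γ := by
    intro θ' s
    simp only [hPγ, ← Finset.mul_sum]
    rw [Finset.sum_comm]
    rw [Finset.sum_congr rfl (fun a _ => show (∑ s', π θ' s a * P s a s') = π θ' s a by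
      rw [← Finset.mul_sum, hP1, mul_one])]
    rw [hπ1, mul_one]
  -- invertibility of I - Pγ
  have hdet : ∀ θ' : EuclideanSpace ℝ (Fin d), (1 - Pγ θ').det ≠ 0 := by
    intro θ' h0
    obtain ⟨x, hx0, hxe⟩ := (Matrix.exists_mulVec_eq_zero_iff).2 h0
    have hxB : ∀ s, x s = ∑ s', Pγ θ' s s' * x s' := by
      intro s
      have h2 := congrFun hxe s
      simp only [Matrix.sub_mulVec, Matrix.one_mulVec, Pi.sub_apply, Matrix.mulVec,
        dotProduct, Pi.zero_apply, Matrix.sub_apply, Matrix.one_apply, sub_mul,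
        Finset.sum_sub_distrib, ite_mul, one_mul, zero_mul, Finset.sum_ite_eq,
        Finset.mem_univ, if_true] at h2
      linarith
    obtain ⟨s₀, -, hmax⟩ := Finset.exists_max_image Finset.univ (fun s => |x s|)
      ⟨Classical.arbitrary S, Finset.mem_univ _⟩
    have hb : |x s₀| ≤ γ * |x s₀| := by
      calc |x s₀| = |∑ s', Pγ θ' s₀ s' * x s'| := by rw [← hxB]
        _ ≤ ∑ s', |Pγ θ' s₀ s' * x s'| := Finset.abs_sum_le_sum_abs _ _
        _ ≤ ∑ s', Pγ θ' s₀ s' * |x s₀| := by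
            refine Finset.sum_le_sum fun s' _ => ?_
            rw [abs_mul, abs_of_nonneg (hPγ0 θ' s₀ s')]
            exact mul_le_mul_of_nonneg_left (hmax s' (Finset.mem_univ _)) (hPγ0 θ' s₀ s')
        _ = γ * |x s₀| := by rw [← Finset.sum_mul, hPγsum]
    have hz : |x s₀| ≤ 0 := by nlinarith [abs_nonneg (x s₀)]
    refine hx0 (funext fun s => ?_)
    have : |x s| ≤ 0 := le_trans (hmax s (Finset.mem_univ _)) hz
    have := le_antisymm this (abs_nonneg _)
    simpa [abs_eq_zero] using this
  have hdetU : ∀ θ' : EuclideanSpace ℝ (Fin d), IsUnit (1 - Pγ θ').det :=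
    fun θ' => isUnit_iff_ne_zero.2 (hdet θ')
  -- differentiability of the entries of the inverse at θ
  have hInvd : ∀ i j, DifferentiableAt ℝ (fun θ' => (1 - Pγ θ')⁻¹ i j) θ := by
    intro i j
    have he : (fun θ' => (1 - Pγ θ')⁻¹ i j)
        = fun θ' => ((1 - Pγ θ').det)⁻¹ * ((1 - Pγ θ').updateRow j (Pi.single i 1)).det := by
      funext θ'
      rw [Matrix.inv_def, Matrix.smul_apply, Matrix.adjugate_apply, Ring.inverse_eq_inv,
        smul_eq_mul]
    rw [he]
    refine DifferentiableAt.mul ?_ ?_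
    · exact (aux_det_diff _ _ fun i' j' => hMd θ i' j').inv (hdet θ)
    · refine aux_det_diff _ _ fun i' j' => ?_
      rcases eq_or_ne i' j with h | h
      · simp only [Matrix.updateRow_apply, if_pos h]
        exact differentiableAt_const _
      · simp only [Matrix.updateRow_apply, if_neg h]
        exact hMd θ i' j'
  -- r entries are differentiable
  have hrd : ∀ (θ' : EuclideanSpace ℝ (Fin d)) s,
      DifferentiableAt ℝ (fun θ'' => ∑ a, π θ'' s a * rbar s a) θ' :=
    fun θ' s => DifferentiableAt.fun_sum fun a _ => (hπd θ' s a).mul_const _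
  -- v entries are differentiable at θ
  have hvE : ∀ (θ' : EuclideanSpace ℝ (Fin d)) s,
      v θ' s = ∑ s', (1 - Pγ θ')⁻¹ s s' * ∑ a, π θ' s' a * rbar s' a := by
    intro θ' s
    rw [hv]
    simp [Matrix.mulVec, dotProduct]
  have hvd : ∀ s, DifferentiableAt ℝ (fun θ' => v θ' s) θ := by
    intro s
    have he : (fun θ' => v θ' s)
        = fun θ' => ∑ s', (1 - Pγ θ')⁻¹ s s' * ∑ a, π θ' s' a * rbar s' a :=
      funext fun θ' => hvE θ' s
    rw [he]
    exact DifferentiableAt.fun_sum fun s' _ => (hInvd s s').mul (hrd θ s')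
  -- Bellman equation
  have hBell : ∀ (θ' : EuclideanSpace ℝ (Fin d)) s,
      v θ' s = ∑ a, π θ' s a * (rbar s a + γ * ∑ s', P s a s' * v θ' s') := by
    intro θ' s
    have h1 : (1 - Pγ θ') *ᵥ v θ' = fun s => ∑ a, π θ' s a * rbar s a := by
      rw [hv, Matrix.mulVec_mulVec, Matrix.mul_nonsing_inv _ (hdetU θ'), Matrix.one_mulVec]
    have h2 := congrFun h1 s
    simp only [Matrix.sub_mulVec, Matrix.one_mulVec, Pi.sub_apply, Matrix.mulVec,
      dotProduct, Matrix.sub_apply, Matrix.one_apply, sub_mul,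
      Finset.sum_sub_distrib, ite_mul, one_mul, zero_mul, Finset.sum_ite_eq,
      Finset.mem_univ, if_true] at h2
    have h3 : v θ' s = ∑ s', Pγ θ' s s' * v θ' s' + ∑ a, π θ' s a * rbar s a := by linarith
    rw [h3]
    have h4 : ∑ s', Pγ θ' s s' * v θ' s'
        = ∑ a, π θ' s a * (γ * ∑ s', P s a s' * v θ' s') := by
      simp only [hPγ]
      exact (aux_swap (fun a => π θ' s a) (fun a s' => P s a s') (v θ') γ).symm
    rw [h4, ← Finset.sum_add_distrib]
    exact Finset.sum_congr rfl fun a _ => by ring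
  -- differentiability of the q-like term
  have hqd : ∀ s a,
      DifferentiableAt ℝ (fun θ' => rbar s a + γ * ∑ s', P s a s' * v θ' s') θ :=
    fun s a => (differentiableAt_const _).add
      ((DifferentiableAt.fun_sum fun s' _ => (hvd s').const_mul _).const_mul _)
  -- fderiv of v entries via the Bellman equation
  have hDv : ∀ s, fderiv ℝ (fun θ' => v θ' s) θ
      = ∑ a, (π θ s a • fderiv ℝ (fun θ' => rbar s a + γ * ∑ s', P s a s' * v θ' s') θ
          + (rbar s a + γ * ∑ s', P s a s' * v θ s') • fderiv ℝ (fun θ' => π θ' s a) θ) := by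
    intro s
    have he : (fun θ' => v θ' s)
        = fun θ' => ∑ a, π θ' s a * (rbar s a + γ * ∑ s', P s a s' * v θ' s') :=
      funext fun θ' => hBell θ' s
    rw [he, fderiv_fun_sum (A := fun a θ' => π θ' s a * (rbar s a + γ * ∑ s', P s a s' * v θ' s'))
      (fun a _ => (hπd θ s a).mul (hqd s a))]
    exact Finset.sum_congr rfl fun a _ => fderiv_fun_mul (hπd θ s a) (hqd s a)
  have hDq : ∀ s a, fderiv ℝ (fun θ' => rbar s a + γ * ∑ s', P s a s' * v θ' s') θ
      = γ • ∑ s', P s a s' • fderiv ℝ (fun θ' => v θ' s') θ := by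
    intro s a
    rw [fderiv_const_add,
      fderiv_const_mul (DifferentiableAt.fun_sum fun s' _ => (hvd s').const_mul _) γ,
      fderiv_fun_sum (fun s' _ => (hvd s').const_mul _)]
    congr 1
    exact Finset.sum_congr rfl fun s' _ => fderiv_const_mul (hvd s') _
  -- pointwise identity of derivatives
  have key : ∀ u : EuclideanSpace ℝ (Fin d),
      fderiv ℝ J θ u
        = ∑ s, ∑ a, (m θ s * q θ s a) * (fderiv ℝ (fun θ' => π θ' s a) θ u) := by
    intro u
    set x : S → ℝ := fun s => fderiv ℝ (fun θ' => v θ' s) θ u with hxdef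
    have hxeval : ∀ s, x s = ∑ s', Pγ θ s s' * x s'
        + ∑ a, q θ s a * fderiv ℝ (fun θ' => π θ' s a) θ u := by
      intro s
      have h1 : x s = ∑ a, (π θ s a * (γ * ∑ s', P s a s' * x s')
          + q θ s a * fderiv ℝ (fun θ' => π θ' s a) θ u) := by
        simp only [hxdef]
        rw [hDv s, ContinuousLinearMap.sum_apply]
        refine Finset.sum_congr rfl fun a _ => ?_
        rw [ContinuousLinearMap.add_apply, ← hq θ s a]
        simp only [hDq, ContinuousLinearMap.smul_apply, ContinuousLinearMap.sum_apply,
          smul_eq_mul]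
      rw [h1, Finset.sum_add_distrib]
      congr 1
      simp only [hPγ]
      exact aux_swap (fun a => π θ s a) (fun a s' => P s a s') x γ
    have hMx : (1 - Pγ θ) *ᵥ x
        = fun s => ∑ a, q θ s a * fderiv ℝ (fun θ' => π θ' s a) θ u := by
      funext s
      simp only [Matrix.sub_mulVec, Matrix.one_mulVec, Pi.sub_apply, Matrix.mulVec,
        dotProduct, Matrix.sub_apply, Matrix.one_apply, sub_mul,
        Finset.sum_sub_distrib, ite_mul, one_mul, zero_mul, Finset.sum_ite_eq,
        Finset.mem_univ, if_true]
      have := hxeval s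
      linarith
    have hxinv : x = (1 - Pγ θ)⁻¹ *ᵥ
        (fun s => ∑ a, q θ s a * fderiv ℝ (fun θ' => π θ' s a) θ u) := by
      rw [← hMx, Matrix.mulVec_mulVec, Matrix.nonsing_inv_mul _ (hdetU θ),
        Matrix.one_mulVec]
    have hJd : fderiv ℝ J θ u = ∑ s, dμ s * x s := by
      have he : J = fun θ' => ∑ s, dμ s * v θ' s := funext hJ
      rw [he, fderiv_fun_sum (fun s _ => (hvd s).const_mul _), ContinuousLinearMap.sum_apply]
      exact Finset.sum_congr rfl fun s _ => by
        rw [fderiv_const_mul (hvd s), ContinuousLinearMap.smul_apply, smul_eq_mul]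
    rw [hJd]
    calc ∑ s, dμ s * x s
        = ∑ s, dμ s * ∑ s', (1 - Pγ θ)⁻¹ s s'
            * ∑ a, q θ s' a * fderiv ℝ (fun θ' => π θ' s' a) θ u := by
          refine Finset.sum_congr rfl fun s _ => ?_
          rw [congrFun hxinv s]
          simp [Matrix.mulVec, dotProduct]
      _ = ∑ s', (∑ s, dμ s * (1 - Pγ θ)⁻¹ s s')
            * ∑ a, q θ s' a * fderiv ℝ (fun θ' => π θ' s' a) θ u := by
          exact aux_swap2 dμ (fun s s' => (1 - Pγ θ)⁻¹ s s')
            (fun s' => ∑ a, q θ s' a * fderiv ℝ (fun θ' => π θ' s' a) θ u)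
      _ = ∑ s', m θ s' * ∑ a, q θ s' a * fderiv ℝ (fun θ' => π θ' s' a) θ u := by
          refine Finset.sum_congr rfl fun s' _ => ?_
          rw [hm]
      _ = ∑ s, ∑ a, (m θ s * q θ s a) * fderiv ℝ (fun θ' => π θ' s a) θ u := by
          refine Finset.sum_congr rfl fun s _ => ?_
          rw [Finset.mul_sum]
          exact Finset.sum_congr rfl fun a _ => by ring
  ext u
  rw [key u]
  simp [ContinuousLinearMap.sum_apply, ContinuousLinearMap.smul_apply, smul_eq_mul]
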